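/- (R-linear convergence implies cost-rate equivalence via geometric series.) Let (H_n)_{n≥0} be a sequence of nonnegative reals with H_n ≤ C q^{n-m} H_m for all m < n, where C > 0 and 0 < q < 1, and let (T_n) be positive reals. Then for any s > 0: sup_n (Σ_{m ≤ n} T_m)^s H_n ≤ (C / (1 - q^{1/s})^s) · sup_n T_n^s H_n, provided T_m^s H_m ≤ M(s) := sup_n T_n^s H_n for all m. -/

import Mathlib

lemma geom_sum_le_inv {r : ℝ} (h0 : 0 ≤ r) (h1 : r < 1) (n : ℕ) :
    ∑ i ∈ Finset.range n, r ^ i ≤ (1 - r)⁻¹ := by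
  have := Summable.sum_le_tsum (Finset.range n) (fun i _ => pow_nonneg h0 i)
    (summable_geometric_of_lt_one h0 h1)
  rwa [tsum_geometric_of_lt_one h0 h1] at this

/-- R-linear convergence implies equivalence of rates with respect to cost
(geometric series argument). -/
theorem rates_eq_complexity (H T : ℕ → ℝ) (C q s M : ℝ)
    (hH : ∀ n, 0 ≤ H n) (hT : ∀ n, 0 < T n)
    (hC : 0 < C) (hq0 : 0 < q) (hq1 : q < 1) (hs : 0 < s)
    (hlin : ∀ m n : ℕ, m ≤ n → H n ≤ C * q ^ (n - m) * H m)
    (hM : ∀ m, T m ^ s * H m ≤ M) :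
    ∀ n, (∑ m ∈ Finset.range (n + 1), T m) ^ s * H n
      ≤ C / (1 - q ^ (1 / s)) ^ s * M := by
  intro n
  set r : ℝ := q ^ (1 / s) with hr
  have hr0 : 0 < r := Real.rpow_pos_of_pos hq0 _
  have hr1 : r < 1 := Real.rpow_lt_one hq0.le hq1 (by positivity)
  have h1r : 0 < 1 - r := by linarith
  have hTs0 : ∀ m, (0:ℝ) < T m ^ s := fun m => Real.rpow_pos_of_pos (hT m) s
  have hM0 : 0 ≤ M := le_trans (mul_nonneg (hTs0 0).le (hH 0)) (hM 0)
  have hRHS : 0 ≤ C / (1 - r) ^ s * M := by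
    have : (0:ℝ) < (1 - r) ^ s := Real.rpow_pos_of_pos h1r _
    positivity
  rcases (hH n).lt_or_eq with hHn | hHn
  · -- H n > 0
    set X : ℝ := C * M / H n with hX
    have hX0 : 0 ≤ X := by positivity
    set A : ℝ := X ^ (1 / s) with hA
    have hA0 : 0 ≤ A := Real.rpow_nonneg hX0 _
    have hq_pow : ∀ k : ℕ, (q ^ k) ^ (1 / s) = r ^ k := fun k => by
      rw [← Real.rpow_natCast q k, ← Real.rpow_mul hq0.le, mul_comm,
        Real.rpow_mul hq0.le, Real.rpow_natCast]
    have key : ∀ m, m ≤ n → T m ≤ A * r ^ (n - m) := by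
      intro m hm
      have h1 : T m ^ s * H n ≤ C * q ^ (n - m) * M := by
        calc T m ^ s * H n ≤ T m ^ s * (C * q ^ (n - m) * H m) := by
              have := hlin m n hm
              nlinarith [hTs0 m]
          _ = C * q ^ (n - m) * (T m ^ s * H m) := by ring
          _ ≤ C * q ^ (n - m) * M := by
              have : (0:ℝ) ≤ C * q ^ (n - m) := by positivity
              exact mul_le_mul_of_nonneg_left (hM m) this
      have h2 : T m ^ s ≤ X * q ^ (n - m) := by
        rw [hX, div_mul_eq_mul_div, le_div_iff₀ hHn]
        calc T m ^ s * H n ≤ C * q ^ (n - m) * M := h1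
          _ = C * M * q ^ (n - m) := by ring
      calc T m = (T m ^ s) ^ (1 / s) := by
            rw [one_div, Real.rpow_rpow_inv (hT m).le hs.ne']
        _ ≤ (X * q ^ (n - m)) ^ (1 / s) :=
            Real.rpow_le_rpow (hTs0 m).le h2 (by positivity)
        _ = A * r ^ (n - m) := by
            rw [Real.mul_rpow hX0 (by positivity), hq_pow]
    have hsum : ∑ m ∈ Finset.range (n + 1), T m ≤ A * (1 - r)⁻¹ := by
      calc ∑ m ∈ Finset.range (n + 1), T m
          ≤ ∑ m ∈ Finset.range (n + 1), A * r ^ (n - m) := by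
            refine Finset.sum_le_sum fun m hm => key m ?_
            exact Nat.lt_succ_iff.mp (Finset.mem_range.mp hm)
        _ = A * ∑ m ∈ Finset.range (n + 1), r ^ (n - m) := by
            rw [Finset.mul_sum]
        _ = A * ∑ m ∈ Finset.range (n + 1), r ^ m := by
            rw [← Finset.sum_range_reflect (fun j => r ^ j) (n + 1)]
            simp
        _ ≤ A * (1 - r)⁻¹ :=
            mul_le_mul_of_nonneg_left (geom_sum_le_inv hr0.le hr1 _) hA0
    have hsum0 : 0 ≤ ∑ m ∈ Finset.range (n + 1), T m :=
      Finset.sum_nonneg fun m _ => (hT m).le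
    have hfin : (∑ m ∈ Finset.range (n + 1), T m) ^ s ≤ X * ((1 - r) ^ s)⁻¹ := by
      calc (∑ m ∈ Finset.range (n + 1), T m) ^ s
          ≤ (A * (1 - r)⁻¹) ^ s := Real.rpow_le_rpow hsum0 hsum hs.le
        _ = A ^ s * ((1 - r)⁻¹) ^ s := Real.mul_rpow hA0 (by positivity)
        _ = X * ((1 - r) ^ s)⁻¹ := by
            rw [hA, one_div, Real.rpow_inv_rpow hX0 hs.ne',
              ← Real.inv_rpow h1r.le]
    have h1rs : (0:ℝ) < (1 - r) ^ s := Real.rpow_pos_of_pos h1r _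
    calc (∑ m ∈ Finset.range (n + 1), T m) ^ s * H n
        ≤ X * ((1 - r) ^ s)⁻¹ * H n := mul_le_mul_of_nonneg_right hfin (hH n)
      _ = C / (1 - r) ^ s * M := by
          rw [hX]; field_simp
  · rw [← hHn, mul_zero]
    exact hRHS
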